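/- arXiv:1902.07898 — 6 statements merged into one kernel-verified Lean document; each statement's English description precedes it below -/
import Mathlib

section
/- Let α > 0 be real, let z, w ∈ ℂ with w² = z − α, and define f : ℝ → ℂ by f(x) = (1 + 2√α·x)^μ (complex power of the positive real base) where μ = i·w/(2√α) + 1/2. Then for every x ≥ 0 the function f is twice differentiable at x with f''(x) = −z·(1 + 2√α·x)^{−2}·f(x); moreover f(0) = 1, f'(0) = i·w + √α, and if z ≠ 0 and w ≠ −i√α then f'(0)/(z·f(0)) = i/(w + i√α). -/
lemma cpow_aux (c : ℂ) (s x : ℝ) (hx : 0 < 1 + 2 * s * x) :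
    HasDerivAt (fun y : ℝ => ((1 + 2 * s * y : ℝ) : ℂ) ^ c)
      (c * ((1 + 2 * s * x : ℝ) : ℂ) ^ (c - 1) * ((2 * s : ℝ) : ℂ)) x := by
  have h0 : ((1 + 2 * s * x : ℝ) : ℂ) ∈ Complex.slitPlane :=
    Complex.ofReal_mem_slitPlane.2 hx
  have hu : HasDerivAt (fun u : ℝ => ((u : ℝ) : ℂ) ^ c)
      (c * ((1 + 2 * s * x : ℝ) : ℂ) ^ (c - 1)) (1 + 2 * s * x) :=
    (Complex.hasStrictDerivAt_cpow_const h0).hasDerivAt.comp_ofReal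
  have hin : HasDerivAt (fun y : ℝ => 1 + 2 * s * y) (2 * s) x := by
    simpa using ((hasDerivAt_id x).const_mul (2 * s)).const_add 1
  have hc : HasDerivAt (fun y : ℝ => ((1 + 2 * s * y : ℝ) : ℂ) ^ c)
      ((2 * s) • (c * ((1 + 2 * s * x : ℝ) : ℂ) ^ (c - 1))) x := HasDerivAt.scomp_of_eq x hu hin rfl
  convert hc using 1
  simp [Complex.real_smul]
  ring

/-- For `α > 0` and `w² = z − α`, the function `f(x) = (1+2√α·x)^{iw/(2√α)+1/2}`
solves `−f'' = z(1+2√α·x)^{−2} f` on `[0,∞)`, with `f(0) = 1`, `f'(0) = iw + √α`, and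
`f'(0)/(z f(0)) = i/(w + i√α)` (the Weyl–Titchmarsh function of the model string `S_α`). -/
theorem stmt_2 (α : ℝ) (hα : 0 < α) (z w : ℂ) (hw : w ^ 2 = z - (α : ℂ))
    (μ : ℂ) (hμ : μ = Complex.I * w / (2 * (Real.sqrt α : ℂ)) + 1 / 2)
    (f : ℝ → ℂ) (hf : ∀ x : ℝ, f x = ((1 + 2 * Real.sqrt α * x : ℝ) : ℂ) ^ μ) :
    (∀ x : ℝ, 0 ≤ x →
      DifferentiableAt ℝ f x ∧
      HasDerivAt (deriv f)
        (-z * ((1 + 2 * Real.sqrt α * x : ℝ) : ℂ) ^ (-2 : ℤ) * f x) x) ∧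
    f 0 = 1 ∧
    deriv f 0 = Complex.I * w + (Real.sqrt α : ℂ) ∧
    (z ≠ 0 → w ≠ -Complex.I * (Real.sqrt α : ℂ) →
      deriv f 0 / (z * f 0) = Complex.I / (w + Complex.I * (Real.sqrt α : ℂ))) := by
  set s : ℝ := Real.sqrt α with hsdef
  have hs : 0 < s := Real.sqrt_pos.mpr hα
  have hs2 : (s : ℂ) ^ 2 = (α : ℂ) := by
    norm_cast
    exact Real.sq_sqrt hα.le
  have hsne : (s : ℂ) ≠ 0 := by exact_mod_cast hs.ne'
  -- derivative of the base
  have hbase : ∀ x : ℝ, HasDerivAt (fun x : ℝ => ((1 + 2 * s * x : ℝ) : ℂ)) ((2 * s : ℝ) : ℂ) x := by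
    intro x
    have h1 : HasDerivAt (fun x : ℝ => 1 + 2 * s * x) (2 * s) x := by
      simpa using ((hasDerivAt_id x).const_mul (2 * s)).const_add 1
    exact h1.ofReal_comp
  -- first derivative
  have hd1 : ∀ x : ℝ, 0 < 1 + 2 * s * x →
      HasDerivAt f (μ * ((1 + 2 * s * x : ℝ) : ℂ) ^ (μ - 1) * ((2 * s : ℝ) : ℂ)) x := by
    intro x hx
    have h0 : ((1 + 2 * s * x : ℝ) : ℂ) ∈ Complex.slitPlane :=
      Complex.ofReal_mem_slitPlane.2 hx
    refine (cpow_aux μ s x hx).congr_of_eventuallyEq ?_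
    filter_upwards with y using hf y
  have hderiv : ∀ x : ℝ, 0 < 1 + 2 * s * x →
      deriv f x = μ * ((1 + 2 * s * x : ℝ) : ℂ) ^ (μ - 1) * ((2 * s : ℝ) : ℂ) := by
    intro x hx
    exact (hd1 x hx).deriv
  have hopen : IsOpen {x : ℝ | 0 < 1 + 2 * s * x} :=
    isOpen_lt continuous_const (by continuity)
  -- second derivative
  have hd2 : ∀ x : ℝ, 0 < 1 + 2 * s * x →
      HasDerivAt (deriv f)
        (-z * ((1 + 2 * s * x : ℝ) : ℂ) ^ (-2 : ℤ) * f x) x := by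
    intro x hx
    have h0 : ((1 + 2 * s * x : ℝ) : ℂ) ∈ Complex.slitPlane :=
      Complex.ofReal_mem_slitPlane.2 hx
    have hne : ((1 + 2 * s * x : ℝ) : ℂ) ≠ 0 := Complex.slitPlane_ne_zero h0
    have h3 := cpow_aux (μ - 1) s x hx
    have hD : HasDerivAt (fun y : ℝ => μ * ((1 + 2 * s * y : ℝ) : ℂ) ^ (μ - 1) * ((2 * s : ℝ) : ℂ))
        (μ * ((μ - 1) * ((1 + 2 * s * x : ℝ) : ℂ) ^ (μ - 1 - 1) * ((2 * s : ℝ) : ℂ)) * ((2 * s : ℝ) : ℂ)) x :=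
      (h3.const_mul μ).mul_const _
    have heq : (fun y : ℝ => μ * ((1 + 2 * s * y : ℝ) : ℂ) ^ (μ - 1) * ((2 * s : ℝ) : ℂ)) =ᶠ[nhds x] deriv f := by
      filter_upwards [hopen.mem_nhds hx] with y hy
      exact (hderiv y hy).symm
    have hD' := hD.congr_of_eventuallyEq heq.symm
    refine hD'.congr_deriv ?_
    symm
    -- show -z * base^(-2) * f x = μ*(μ-1)*base^(μ-2)*(2s)^2
    rw [hf x]
    have hA : (2 * (s : ℂ)) * μ = Complex.I * w + s := by
      rw [hμ]; field_simp
    have hB : (2 * (s : ℂ)) * (μ - 1) = Complex.I * w - s := by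
      rw [hμ]; field_simp; ring
    have hkey : ((2 * (s : ℂ)) * μ) * ((2 * (s : ℂ)) * (μ - 1)) = -z := by
      rw [hA, hB]
      linear_combination (-1 : ℂ) * hw - hs2 + w ^ 2 * Complex.I_sq
    have hcoef : μ * (μ - 1) * ((2 * s : ℝ) : ℂ) * ((2 * s : ℝ) : ℂ) = -z := by
      push_cast
      linear_combination hkey
    have hsplit : ((1 + 2 * s * x : ℝ) : ℂ) ^ (-2 : ℤ) * ((1 + 2 * s * x : ℝ) : ℂ) ^ μ
        = ((1 + 2 * s * x : ℝ) : ℂ) ^ (μ - 1 - 1) := by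
      rw [← Complex.cpow_intCast, ← Complex.cpow_add _ _ hne]
      norm_num
      ring_nf
    calc -z * ((1 + 2 * s * x : ℝ) : ℂ) ^ (-2 : ℤ) * ((1 + 2 * s * x : ℝ) : ℂ) ^ μ
        = -z * (((1 + 2 * s * x : ℝ) : ℂ) ^ (-2 : ℤ) * ((1 + 2 * s * x : ℝ) : ℂ) ^ μ) := by ring
      _ = -z * ((1 + 2 * s * x : ℝ) : ℂ) ^ (μ - 1 - 1) := by rw [hsplit]
      _ = μ * (μ - 1) * ((2 * s : ℝ) : ℂ) * ((2 * s : ℝ) : ℂ) * ((1 + 2 * s * x : ℝ) : ℂ) ^ (μ - 1 - 1) := by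
          rw [hcoef]
      _ = μ * ((μ - 1) * ((1 + 2 * s * x : ℝ) : ℂ) ^ (μ - 1 - 1) * ((2 * s : ℝ) : ℂ)) * ((2 * s : ℝ) : ℂ) := by
          ring
  have hpos : ∀ x : ℝ, 0 ≤ x → 0 < 1 + 2 * s * x := by
    intro x hx
    nlinarith [hs]
  have hf0 : f 0 = 1 := by
    rw [hf 0]
    norm_num
  have hdf0 : deriv f 0 = Complex.I * w + (s : ℂ) := by
    rw [hderiv 0 (by norm_num)]
    rw [hμ]
    push_cast
    norm_num
    field_simp
  refine ⟨fun x hx => ⟨(hd1 x (hpos x hx)).differentiableAt, hd2 x (hpos x hx)⟩, hf0, hdf0, ?_⟩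
  intro hz hwne
  rw [hdf0, hf0, mul_one]
  have hne2 : w + Complex.I * (s : ℂ) ≠ 0 := by
    intro h
    apply hwne
    linear_combination h
  rw [div_eq_div_iff hz hne2]
  linear_combination Complex.I * hw + Complex.I * hs2 + w * (s:ℂ) * Complex.I_sq
end

section
/- Define F(s) = 2(s³ + s)/(s² − 1)² + log(|s − 1|/|s + 1|) for real s ∈ (0,1) ∪ (1,∞). Then F(s) ≥ 16/(3s³) > 0 for every s > 1, and F(s) ≥ 16·s³/3 > 0 for every s ∈ (0,1). -/
open Real Set

noncomputable def phi8 (x : ℝ) : ℝ :=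
  2 * (x ^ 3 + x) / (x ^ 2 - 1) ^ 2 + (Real.log (1 - x) - Real.log (1 + x)) - 16 * x ^ 3 / 3

lemma phi8_deriv {x : ℝ} (hx0 : -1 < x) (hx1 : x < 1) :
    HasDerivAt phi8 (16 * x ^ 2 / (1 - x ^ 2) ^ 3 - 16 * x ^ 2) x := by
  have hx2 : x ^ 2 - 1 ≠ 0 := by nlinarith
  have hne : (x ^ 2 - 1) ^ 2 ≠ 0 := pow_ne_zero _ hx2
  have h1m : (1 : ℝ) - x ≠ 0 := by linarith
  have h1p : (1 : ℝ) + x ≠ 0 := by linarith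
  have hnum : HasDerivAt (fun x : ℝ => 2 * (x ^ 3 + x)) (2 * (3 * x ^ 2 + 1)) x := by
    have := ((hasDerivAt_pow 3 x).add (hasDerivAt_id x)).const_mul (2:ℝ)
    simpa using this
  have hden : HasDerivAt (fun x : ℝ => (x ^ 2 - 1) ^ 2) (2 * (x ^ 2 - 1) * (2 * x)) x := by
    have hb : HasDerivAt (fun x : ℝ => x ^ 2 - 1) (2 * x) x := by
      simpa using (hasDerivAt_pow 2 x).sub_const 1
    simpa using hb.fun_pow 2
  have hdiv := hnum.div hden hne
  have hlog1 : HasDerivAt (fun x : ℝ => Real.log (1 - x)) (-1 / (1 - x)) x := by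
    have hb : HasDerivAt (fun x : ℝ => 1 - x) (-1) x := by
      simpa using (hasDerivAt_id x).const_sub 1
    simpa using hb.log h1m
  have hlog2 : HasDerivAt (fun x : ℝ => Real.log (1 + x)) (1 / (1 + x)) x := by
    have hb : HasDerivAt (fun x : ℝ => 1 + x) 1 x := by
      simpa using (hasDerivAt_id x).const_add 1
    simpa using hb.log h1p
  have hcub : HasDerivAt (fun x : ℝ => 16 * x ^ 3 / 3) (16 * (3 * x ^ 2) / 3) x := by
    have := ((hasDerivAt_pow 3 x).const_mul (16:ℝ)).div_const 3
    simpa using this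
  have h := (hdiv.add (hlog1.sub hlog2)).sub hcub
  have hone : (1:ℝ) - x ^ 2 ≠ 0 := by nlinarith
  refine (HasDerivAt.congr_deriv (f := phi8) h ?_)
  field_simp
  ring

lemma key8 (x : ℝ) (hx : x ∈ Set.Ioo (0:ℝ) 1) :
    16 * x ^ 3 / 3 ≤ 2 * (x ^ 3 + x) / (x ^ 2 - 1) ^ 2 +
      (Real.log (1 - x) - Real.log (1 + x)) := by
  have hmono : StrictMonoOn phi8 (Set.Ico 0 1) := by
    apply strictMonoOn_of_deriv_pos (convex_Ico 0 1)
    · intro y hy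
      exact (phi8_deriv (by linarith [hy.1]) hy.2).continuousAt.continuousWithinAt
    · intro y hy
      rw [interior_Ico] at hy
      rw [(phi8_deriv (by linarith [hy.1]) hy.2).deriv]
      have hu : 0 < 1 - y ^ 2 := by nlinarith [hy.1, hy.2]
      have hu1 : (1 - y ^ 2) ^ 3 < 1 := by
        apply pow_lt_one₀ (le_of_lt hu) (by nlinarith [hy.1, hy.2]) (by norm_num)
      have hy2 : 0 < 16 * y ^ 2 := by have := hy.1; positivity
      rw [sub_pos, lt_div_iff₀ (pow_pos hu 3)]
      calc 16 * y ^ 2 * (1 - y ^ 2) ^ 3 < 16 * y ^ 2 * 1 := by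
            exact mul_lt_mul_of_pos_left hu1 hy2
        _ = 16 * y ^ 2 := by ring
  have h0 : phi8 0 = 0 := by simp [phi8]
  have hlt := hmono (Set.mem_Ico.2 ⟨le_refl 0, one_pos⟩)
    (Set.mem_Ico.2 ⟨le_of_lt hx.1, hx.2⟩) hx.1
  rw [h0] at hlt
  unfold phi8 at hlt
  linarith

/-- Lower bounds for `F(s) = 2(s³+s)/(s²−1)² + log(|s−1|/|s+1|)`:
`F(s) ≥ 16/(3s³) > 0` for `s > 1` and `F(s) ≥ 16s³/3 > 0` for `s ∈ (0,1)`. -/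
theorem stmt_8 (F : ℝ → ℝ)
    (hF : ∀ s ∈ Set.Ioo (0:ℝ) 1 ∪ Set.Ioi 1,
      F s = 2 * (s ^ 3 + s) / (s ^ 2 - 1) ^ 2 + Real.log (|s - 1| / |s + 1|)) :
    (∀ s : ℝ, 1 < s → 16 / (3 * s ^ 3) ≤ F s ∧ 0 < 16 / (3 * s ^ 3)) ∧
    (∀ s ∈ Set.Ioo (0:ℝ) 1, 16 * s ^ 3 / 3 ≤ F s ∧ 0 < 16 * s ^ 3 / 3) := by
  constructor
  · intro s hs
    have hs0 : (0:ℝ) < s := by linarith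
    refine ⟨?_, by positivity⟩
    have hFs := hF s (Or.inr hs)
    set x := 1 / s with hxdef
    have hx : x ∈ Set.Ioo (0:ℝ) 1 := by
      constructor
      · positivity
      · rw [hxdef, div_lt_one hs0]; exact hs
    have hs2 : s ^ 2 - 1 ≠ 0 := by nlinarith
    have hsne : s ≠ 0 := ne_of_gt hs0
    have e1 : 2 * (s ^ 3 + s) / (s ^ 2 - 1) ^ 2 = 2 * (x ^ 3 + x) / (x ^ 2 - 1) ^ 2 := by
      have h1 : x ^ 3 + x = (1 + s ^ 2) / s ^ 3 := by rw [hxdef]; field_simp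
      have h2 : (x ^ 2 - 1) ^ 2 = (s ^ 2 - 1) ^ 2 / s ^ 4 := by rw [hxdef]; field_simp; ring
      rw [h1, h2]
      rw [div_eq_div_iff (pow_ne_zero _ hs2) (div_ne_zero (pow_ne_zero _ hs2) (by positivity))]
      field_simp
      ring
    have e2 : Real.log (|s - 1| / |s + 1|) = Real.log (1 - x) - Real.log (1 + x) := by
      rw [abs_of_pos (by linarith), abs_of_pos (by linarith)]
      have : (s - 1) / (s + 1) = (1 - x) / (1 + x) := by
        rw [hxdef]; field_simp
      rw [this, Real.log_div (by linarith [hx.2] : (1:ℝ) - x ≠ 0) (by linarith [hx.1] : (1:ℝ) + x ≠ 0)]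
    have e3 : 16 / (3 * s ^ 3) = 16 * x ^ 3 / 3 := by
      rw [hxdef]; field_simp
    rw [hFs, e1, e2, e3]
    exact key8 x hx
  · intro s hs
    have hs0 := hs.1
    refine ⟨?_, by positivity⟩
    have hFs := hF s (Or.inl hs)
    have e2 : Real.log (|s - 1| / |s + 1|) = Real.log (1 - s) - Real.log (1 + s) := by
      rw [abs_of_neg (by linarith [hs.2] : s - 1 < 0), abs_of_pos (by linarith [hs.1] : (0:ℝ) < s + 1)]
      rw [neg_sub, show s + 1 = 1 + s from by ring, Real.log_div (by linarith [hs.2] : (1:ℝ) - s ≠ 0) (by linarith [hs.1] : (1:ℝ) + s ≠ 0)]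
    rw [hFs, e2]
    exact key8 s hs
end

section
/- Let g, h : [0,∞) → ℂ be continuously differentiable with h compactly supported, and define f(t) = g(log(1+t))·√(1+t) and h_S(t) = h(log(1+t))·√(1+t) for t ∈ [0,∞). Then ∫₀^∞ f'(t)·h_S'(t) dt = ∫₀^∞ g'(x)·h'(x) dx + (1/4)∫₀^∞ g(x)·h(x) dx − (1/2)·g(0)·h(0). -/
open Set MeasureTheory Filter

theorem key_deriv (u u' : ℝ → ℂ)
    (hu : ∀ x ∈ Set.Ici (0:ℝ), HasDerivWithinAt u (u' x) (Set.Ici 0) x)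
    (t : ℝ) (ht : t ∈ Set.Ici (0:ℝ)) :
    HasDerivWithinAt (fun s => u (Real.log (1+s)) * (Real.sqrt (1+s) : ℂ))
      ((u' (Real.log (1+t)) + u (Real.log (1+t)) / 2) / (Real.sqrt (1+t) : ℂ))
      (Set.Ici 0) t := by
  have ht0 : (0:ℝ) ≤ t := ht
  have h1t : (0:ℝ) < 1 + t := by linarith
  have hsq : Real.sqrt (1+t) ≠ 0 := by positivity
  have hadd : HasDerivAt (fun s : ℝ => 1 + s) 1 t := by
    simpa using (hasDerivAt_id t).const_add 1
  have hLder : HasDerivWithinAt (fun s => Real.log (1+s)) ((1+t)⁻¹) (Set.Ici 0) t := by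
    simpa [one_div] using (hadd.log (ne_of_gt h1t)).hasDerivWithinAt
  have hmaps : Set.MapsTo (fun s => Real.log (1+s)) (Set.Ici 0) (Set.Ici 0) := by
    intro s hs
    exact Real.log_nonneg (by simpa using (hs : (0:ℝ) ≤ s))
  have hcomp : HasDerivWithinAt (fun s => u (Real.log (1+s)))
      ((1+t)⁻¹ • u' (Real.log (1+t))) (Set.Ici 0) t :=
    HasDerivWithinAt.scomp t (hu _ (hmaps ht)) hLder hmaps
  have hsqrtR : HasDerivAt (fun s : ℝ => Real.sqrt (1+s)) (1 / (2 * Real.sqrt (1+t))) t := by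
    have := (Real.hasDerivAt_sqrt (ne_of_gt h1t)).comp t hadd
    simpa [Function.comp_def] using this
  have hsqrtC : HasDerivAt (fun s : ℝ => (Real.sqrt (1+s) : ℂ))
      ((1 / (2 * Real.sqrt (1+t)) : ℝ) : ℂ) t := hsqrtR.ofReal_comp
  have hmul := hcomp.mul hsqrtC.hasDerivWithinAt
  refine hmul.congr_deriv ?_
  have hss : (Real.sqrt (1+t) : ℂ) * (Real.sqrt (1+t) : ℂ) = ((1+t:ℝ) : ℂ) := by
    rw [← Complex.ofReal_mul, Real.mul_self_sqrt h1t.le]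
  have h0 : ((Real.sqrt (1+t) : ℝ) : ℂ) ≠ 0 := Complex.ofReal_ne_zero.mpr hsq
  have h1 : ((1+t:ℝ):ℂ) ≠ 0 := Complex.ofReal_ne_zero.mpr (ne_of_gt h1t)
  rw [Complex.real_smul]
  push_cast
  push_cast at hss
  rw [← hss]
  field_simp



/-- Substitution identity for the transformation `f(t) = g(log(1+t))√(1+t)`,
`h_S(t) = h(log(1+t))√(1+t)`:
`∫₀^∞ f' h_S' = ∫₀^∞ g' h' + (1/4)∫₀^∞ g h − (1/2) g(0) h(0)`. -/
theorem stmt_10 (g h g' h' : ℝ → ℂ)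
    (hg : ∀ x ∈ Set.Ici (0:ℝ), HasDerivWithinAt g (g' x) (Set.Ici 0) x)
    (hg'c : ContinuousOn g' (Set.Ici 0))
    (hh : ∀ x ∈ Set.Ici (0:ℝ), HasDerivWithinAt h (h' x) (Set.Ici 0) x)
    (hh'c : ContinuousOn h' (Set.Ici 0))
    (hsupp : HasCompactSupport h)
    (f hS : ℝ → ℂ)
    (hf : ∀ t : ℝ, 0 ≤ t → f t = g (Real.log (1 + t)) * (Real.sqrt (1 + t) : ℂ))
    (hhS : ∀ t : ℝ, 0 ≤ t → hS t = h (Real.log (1 + t)) * (Real.sqrt (1 + t) : ℂ)) :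
    ∫ t in Set.Ioi (0:ℝ), derivWithin f (Set.Ici 0) t * derivWithin hS (Set.Ici 0) t
      = (∫ x in Set.Ioi (0:ℝ), g' x * h' x)
        + (1 / 4) * (∫ x in Set.Ioi (0:ℝ), g x * h x)
        - (1 / 2) * (g 0 * h 0) := by
  have uD : UniqueDiffOn ℝ (Set.Ici (0:ℝ)) := uniqueDiffOn_Ici 0
  -- bound for the support of h
  obtain ⟨R₀, hR₀⟩ := hsupp.isCompact.bddAbove
  set R : ℝ := max R₀ 1 with hRdef
  have hR1 : (1:ℝ) ≤ R := le_max_right _ _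
  have hzh : ∀ x : ℝ, R < x → h x = 0 := by
    intro x hx
    apply image_eq_zero_of_notMem_tsupport
    intro hmem
    exact absurd (hR₀ hmem) (by simp only [not_le]; exact lt_of_le_of_lt (le_max_left _ _) hx)
  have hzh' : ∀ x : ℝ, R < x → h' x = 0 := by
    intro x hx
    have hx0 : (0:ℝ) ≤ x := by linarith
    have hz : HasDerivWithinAt h (0:ℂ) (Set.Ici 0) x := by
      have hev : h =ᶠ[nhds x] fun _ => (0:ℂ) :=
        Filter.eventually_of_mem (Ioi_mem_nhds hx) fun y hy => hzh y hy
      exact ((hasDerivAt_const x (0:ℂ)).congr_of_eventuallyEq hev).hasDerivWithinAt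
    have := (hh x hx0).derivWithin (uD x hx0)
    rw [hz.derivWithin (uD x hx0)] at this
    exact this.symm
  -- continuity of g and h on Ici 0
  have hgc : ContinuousOn g (Set.Ici 0) := fun x hx => (hg x hx).continuousWithinAt
  have hhc : ContinuousOn h (Set.Ici 0) := fun x hx => (hh x hx).continuousWithinAt
  -- integrability of compactly supported continuous functions on Ioi 0
  have integ : ∀ u : ℝ → ℂ, ContinuousOn u (Set.Ici 0) → (∀ x, R < x → u x = 0) →
      MeasureTheory.IntegrableOn u (Set.Ioi 0) := by
    intro u hu hz
    have h1 : MeasureTheory.IntegrableOn u (Set.Ioc 0 R) :=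
      (hu.mono (Set.Icc_subset_Ici_self.trans (by simp))).integrableOn_Icc.mono_set
        Set.Ioc_subset_Icc_self
    have h2 : MeasureTheory.IntegrableOn u (Set.Ioi R) := by
      apply (MeasureTheory.integrableOn_congr_fun (fun x hx => hz x hx) measurableSet_Ioi).mpr
      exact MeasureTheory.integrableOn_zero
    have := h1.union h2
    rwa [Set.Ioc_union_Ioi_eq_Ioi (by linarith : (0:ℝ) ≤ R)] at this
  have I1 : MeasureTheory.IntegrableOn (fun x => g' x * h' x) (Set.Ioi 0) :=
    integ _ (hg'c.mul hh'c) (fun x hx => by rw [hzh' x hx, mul_zero])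
  have I2 : MeasureTheory.IntegrableOn (fun x => g x * h x) (Set.Ioi 0) :=
    integ _ (hgc.mul hhc) (fun x hx => by rw [hzh x hx, mul_zero])
  have I3 : MeasureTheory.IntegrableOn (fun x => g' x * h x + g x * h' x) (Set.Ioi 0) :=
    integ _ ((hg'c.mul hhc).add (hgc.mul hh'c))
      (fun x hx => by rw [hzh x hx, hzh' x hx, mul_zero, mul_zero, add_zero])
  -- integration by parts: ∫ (g h)' = - g 0 * h 0
  have parts : (∫ x in Set.Ioi (0:ℝ), (g' x * h x + g x * h' x)) = - (g 0 * h 0) := by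
    have := MeasureTheory.integral_Ioi_of_hasDerivAt_of_tendsto
      (f := fun x => g x * h x) (f' := fun x => g' x * h x + g x * h' x) (a := 0) (m := 0)
      (((hg 0 Set.self_mem_Ici).continuousWithinAt).mul ((hh 0 Set.self_mem_Ici).continuousWithinAt))
      (fun x hx => ((hg x (le_of_lt (show (0:ℝ) < x from hx))).hasDerivAt (Ici_mem_nhds hx)).mul
        ((hh x (le_of_lt (show (0:ℝ) < x from hx))).hasDerivAt (Ici_mem_nhds hx)))
      I3 ?_
    · rw [this]; ring
    · apply Filter.Tendsto.congr' _ tendsto_const_nhds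
      filter_upwards [Filter.eventually_gt_atTop R] with x hx
      rw [hzh x hx, mul_zero]
  -- change of variables
  have cov : ∀ u : ℝ → ℂ, (∫ t in Set.Ioi (0:ℝ), u (Real.log (1+t)) / ((1+t : ℝ) : ℂ))
      = ∫ x in Set.Ioi (0:ℝ), u x := by
    intro u
    have himg : (fun x => Real.exp x - 1) '' Set.Ioi (0:ℝ) = Set.Ioi 0 := by
      ext s
      constructor
      · rintro ⟨x, hx, rfl⟩
        have : (1:ℝ) < Real.exp x := by
          rw [← Real.exp_zero]; exact Real.exp_lt_exp.2 hx
        simpa using this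
      · intro hs
        refine ⟨Real.log (1+s), ?_, ?_⟩
        · exact Real.log_pos (by simpa using hs.out)
        · show Real.exp (Real.log (1+s)) - 1 = s
          rw [Real.exp_log (by linarith [hs.out])]; ring
    have hcv := MeasureTheory.integral_image_eq_integral_abs_deriv_smul (s := Set.Ioi (0:ℝ)) measurableSet_Ioi
      (f := fun x => Real.exp x - 1) (f' := Real.exp)
      (fun x _ => ((Real.hasDerivAt_exp x).sub_const 1).hasDerivWithinAt)
      (fun a _ b _ hab => Real.exp_injective (by simpa using hab))
      (fun t => u (Real.log (1+t)) / ((1+t : ℝ) : ℂ))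
    rw [himg] at hcv
    rw [hcv]
    apply MeasureTheory.setIntegral_congr_fun measurableSet_Ioi
    intro x _
    have he : (0:ℝ) < Real.exp x := Real.exp_pos x
    have h1e : (1:ℝ) + (Real.exp x - 1) = Real.exp x := by ring
    simp only [h1e, Real.log_exp, abs_of_pos he, Complex.real_smul]
    have hne : ((Real.exp x : ℝ) : ℂ) ≠ 0 := Complex.ofReal_ne_zero.mpr (ne_of_gt he)
    field_simp
  -- rewrite the left-hand side
  have hlhs : (∫ t in Set.Ioi (0:ℝ), derivWithin f (Set.Ici 0) t * derivWithin hS (Set.Ici 0) t)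
      = ∫ t in Set.Ioi (0:ℝ),
          ((g' (Real.log (1+t)) + g (Real.log (1+t)) / 2)
            * (h' (Real.log (1+t)) + h (Real.log (1+t)) / 2)) / ((1+t : ℝ) : ℂ) := by
    apply MeasureTheory.setIntegral_congr_fun measurableSet_Ioi
    intro t ht
    have ht0 : (0:ℝ) ≤ t := le_of_lt ht
    have h1t : (0:ℝ) < 1 + t := by linarith
    show derivWithin f (Set.Ici 0) t * derivWithin hS (Set.Ici 0) t = _
    have hfd : HasDerivWithinAt f
        ((g' (Real.log (1+t)) + g (Real.log (1+t)) / 2) / (Real.sqrt (1+t) : ℂ))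
        (Set.Ici 0) t :=
      (key_deriv g g' hg t ht0).congr (fun s hs => hf s hs) (hf t ht0)
    have hSd : HasDerivWithinAt hS
        ((h' (Real.log (1+t)) + h (Real.log (1+t)) / 2) / (Real.sqrt (1+t) : ℂ))
        (Set.Ici 0) t :=
      (key_deriv h h' hh t ht0).congr (fun s hs => hhS s hs) (hhS t ht0)
    have hss : (Real.sqrt (1+t) : ℂ) * (Real.sqrt (1+t) : ℂ) = ((1+t:ℝ) : ℂ) := by
      rw [← Complex.ofReal_mul, Real.mul_self_sqrt h1t.le]
    rw [hfd.derivWithin (uD t ht0), hSd.derivWithin (uD t ht0), div_mul_div_comm, hss]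
  rw [hlhs, cov (fun x => (g' x + g x / 2) * (h' x + h x / 2))]
  have hexp : (∫ x in Set.Ioi (0:ℝ), (g' x + g x / 2) * (h' x + h x / 2))
      = (∫ x in Set.Ioi (0:ℝ), g' x * h' x)
        + ((1/2 : ℂ) * ∫ x in Set.Ioi (0:ℝ), (g' x * h x + g x * h' x))
        + ((1/4 : ℂ) * ∫ x in Set.Ioi (0:ℝ), g x * h x) := by
    have e1 : (∫ x in Set.Ioi (0:ℝ), (g' x + g x / 2) * (h' x + h x / 2))
        = ∫ x in Set.Ioi (0:ℝ),
            (g' x * h' x + ((1/2:ℂ) * (g' x * h x + g x * h' x) + (1/4:ℂ) * (g x * h x))) := by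
      congr 1
      funext x
      ring
    have I4 : MeasureTheory.IntegrableOn
        (fun x => (1/2:ℂ) * (g' x * h x + g x * h' x) + (1/4:ℂ) * (g x * h x))
        (Set.Ioi 0) := (I3.const_mul _).add (I2.const_mul _)
    rw [e1, MeasureTheory.integral_add I1 I4,
      MeasureTheory.integral_add (I3.const_mul _) (I2.const_mul _),
      MeasureTheory.integral_const_mul, MeasureTheory.integral_const_mul]
    ring
  rw [hexp, parts]
  ring
end

section
/- Let g : [0,∞) → ℂ be continuously differentiable and bounded, and suppose ∫₀^∞ |g'(x) + (1/2)·g(x)|² dx < ∞. Then ∫₀^∞ |g(x)|² dx < ∞ and ∫₀^∞ |g'(x)|² dx < ∞. -/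
open MeasureTheory Set intervalIntegral

/-- Pointwise identity: `|a + b/2|² = |a|² + |b|²/4 + ⟪b, a⟫_ℝ`. -/
lemma abs_sq_add_half (a b : ℂ) :
    ‖a + b / 2‖ ^ 2
      = ‖a‖ ^ 2 + ‖b‖ ^ 2 / 4 + (inner ℝ b a : ℝ) := by
  have hinner : (inner ℝ b a : ℝ) = (starRingEnd ℂ b * a).re := by rw [Complex.inner, mul_comm]
  rw [hinner, Complex.sq_norm, Complex.sq_norm, Complex.sq_norm, Complex.normSq_add]
  have h2 : Complex.normSq (b / 2) = Complex.normSq b / 4 := by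
    rw [Complex.normSq_div]
    norm_num [Complex.normSq_apply]
  have h3 : a * starRingEnd ℂ (b / 2) = (starRingEnd ℂ b * a) / ((2:ℝ):ℂ) := by
    rw [map_div₀, map_ofNat]
    push_cast
    ring
  rw [h2, h3, Complex.div_ofReal_re]
  ring

/-- A bounded continuously differentiable `g : [0,∞) → ℂ` with `g' + g/2` square-integrable
belongs to `H¹[0,∞)`: both `g` and `g'` are square-integrable. -/
theorem stmt_12 (g g' : ℝ → ℂ)
    (hg : ∀ x ∈ Set.Ici (0:ℝ), HasDerivWithinAt g (g' x) (Set.Ici 0) x)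
    (hg'c : ContinuousOn g' (Set.Ici 0))
    (hbdd : ∃ M : ℝ, ∀ x ∈ Set.Ici (0:ℝ), ‖g x‖ ≤ M)
    (hint : MeasureTheory.IntegrableOn (fun x => ‖g' x + g x / 2‖ ^ 2)
      (Set.Ioi 0)) :
    MeasureTheory.IntegrableOn (fun x => ‖g x‖ ^ 2) (Set.Ioi 0) ∧
    MeasureTheory.IntegrableOn (fun x => ‖g' x‖ ^ 2) (Set.Ioi 0) := by
  clear hbdd
  have hcg : ContinuousOn g (Set.Ici 0) := fun x hx => (hg x hx).continuousWithinAt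
  set F : ℝ → ℝ := fun x => ‖g' x + g x / 2‖ ^ 2 with hF
  set A : ℝ → ℝ := fun x => ‖g' x‖ ^ 2 with hA
  set B : ℝ → ℝ := fun x => ‖g x‖ ^ 2 with hB
  set D : ℝ → ℝ := fun x => (inner ℝ (g x) (g' x) : ℝ) with hD
  have hBnn : ∀ x, 0 ≤ B x := fun x => sq_nonneg _
  have hAnn : ∀ x, 0 ≤ A x := fun x => sq_nonneg _
  have hFnn : ∀ x, 0 ≤ F x := fun x => sq_nonneg _
  -- continuity facts on Ici 0
  have hcA : ContinuousOn A (Set.Ici 0) :=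
    (hg'c.norm.pow 2).congr (fun x _ => by simp [hA])
  have hcB : ContinuousOn B (Set.Ici 0) :=
    (hcg.norm.pow 2).congr (fun x _ => by simp [hB])
  have hcD : ContinuousOn D (Set.Ici 0) := hcg.inner hg'c
  -- pointwise identity
  have hpt : ∀ x, F x = A x + B x / 4 + D x := fun x => abs_sq_add_half (g' x) (g x)
  have hII : ∀ {f : ℝ → ℝ}, ContinuousOn f (Set.Ici 0) → ∀ R : ℝ, 0 ≤ R →
      IntervalIntegrable f volume 0 R := by
    intro f hf R hR
    exact (hf.mono (by rw [Set.uIcc_of_le hR]; exact Set.Icc_subset_Ici_self)).intervalIntegrable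
  -- FTC : ∫ 2 D over [0,R] = B R - B 0
  have hFTC : ∀ R : ℝ, 0 ≤ R → ∫ x in (0:ℝ)..R, (2 * D x) = B R - B 0 := by
    intro R hR
    refine intervalIntegral.integral_eq_sub_of_hasDeriv_right_of_le hR
      (hcB.mono Set.Icc_subset_Ici_self) (fun x hx => ?_) ((hII hcD R hR).const_mul 2)
    have hx0 : (0:ℝ) < x := hx.1
    have hda : HasDerivAt g (g' x) x :=
      (hg x (le_of_lt hx0)).hasDerivAt (Ici_mem_nhds hx0)
    have h2 : HasDerivAt B (2 * D x) x := by
      have heq : B = fun y => ‖g y‖ ^ 2 :=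
        funext fun y => by simp [hB]
      rw [heq]
      exact hda.norm_sq
    exact h2.hasDerivWithinAt
  -- the improper integral I of F
  set I : ℝ := ∫ x in Set.Ioi (0:ℝ), F x with hI
  have hFle : ∀ R : ℝ, 0 ≤ R → ∫ x in (0:ℝ)..R, F x ≤ I := by
    intro R hR
    rw [intervalIntegral.integral_of_le hR]
    refine setIntegral_mono_set hint ?_ ?_
    · filter_upwards with x using hFnn x
    · filter_upwards with x hx using hx.1
  -- the key uniform bound on ∫ B over [0, R]
  have hkey : ∀ R : ℝ, 0 ≤ R → ∫ x in (0:ℝ)..R, B x ≤ 4 * I + 2 * B 0 := by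
    intro R hR
    have h1 : ∫ x in (0:ℝ)..R, F x
        = (∫ x in (0:ℝ)..R, A x) + (∫ x in (0:ℝ)..R, B x) / 4 + (B R - B 0) / 2 := by
      have hsum : ∫ x in (0:ℝ)..R, F x
          = (∫ x in (0:ℝ)..R, A x) + ((∫ x in (0:ℝ)..R, B x) / 4
            + (∫ x in (0:ℝ)..R, D x)) := by
        rw [← intervalIntegral.integral_div, ← intervalIntegral.integral_add
          ((hII hcB R hR).div_const 4) (hII hcD R hR),
          ← intervalIntegral.integral_add (hII hcA R hR)
          (((hII hcB R hR).div_const 4).add (hII hcD R hR))]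
        exact intervalIntegral.integral_congr fun x _ => by rw [hpt x]; ring
      rw [hsum]
      have hDint : ∫ x in (0:ℝ)..R, D x = (B R - B 0) / 2 := by
        have h2 : (2:ℝ) * ∫ x in (0:ℝ)..R, D x = B R - B 0 := by
          rw [← intervalIntegral.integral_const_mul]; exact hFTC R hR
        linarith
      rw [hDint]; ring
    have hAint : 0 ≤ ∫ x in (0:ℝ)..R, A x :=
      intervalIntegral.integral_nonneg hR (fun x _ => hAnn x)
    have hFR := hFle R hR
    have hBR : 0 ≤ B R := hBnn R
    linarith
  -- integrability of B on Ioi 0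
  have hBint : IntegrableOn B (Set.Ioi 0) := by
    refine integrableOn_Ioi_of_intervalIntegral_norm_bounded (4 * I + 2 * B 0) 0
      (f := B) (b := fun n : ℕ => (n : ℝ)) (l := Filter.atTop)
      (fun n => (hII hcB n (Nat.cast_nonneg n)).1) tendsto_natCast_atTop_atTop ?_
    filter_upwards with n
    have hnrm : ∫ x in (0:ℝ)..(n:ℝ), ‖B x‖ = ∫ x in (0:ℝ)..(n:ℝ), B x :=
      intervalIntegral.integral_congr fun x _ => Real.norm_of_nonneg (hBnn x)
    rw [hnrm]
    exact hkey n (Nat.cast_nonneg n)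
  refine ⟨hBint, ?_⟩
  -- A ≤ 2 F + B / 2 pointwise, comparison
  have hcmp : ∀ x, A x ≤ 2 * F x + B x / 2 := by
    intro x
    have h1 : ‖g' x‖ ≤ ‖g' x + g x / 2‖ + ‖g x‖ / 2 := by
      have h0 := norm_add_le (g' x + g x / 2) (-(g x / 2))
      have h2 : ‖g x / 2‖ = ‖g x‖ / 2 := by
        rw [norm_div, Complex.norm_two]
      simpa [h2] using h0
    simp only [hA, hF, hB]
    nlinarith [h1, norm_nonneg (g' x),
      sq_nonneg (‖g' x + g x / 2‖ - ‖g x‖ / 2)]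
  have hmeas : AEStronglyMeasurable A (volume.restrict (Set.Ioi 0)) :=
    (hcA.mono Set.Ioi_subset_Ici_self).aestronglyMeasurable measurableSet_Ioi
  have hbound : IntegrableOn (fun x => 2 * F x + B x / 2) (Set.Ioi 0) :=
    (hint.const_mul 2).add (hBint.div_const 2)
  exact hbound.mono' hmeas (Filter.Eventually.of_forall fun x => by
    rw [Real.norm_of_nonneg (hAnn x)]; exact hcmp x)
end

section
/- Let α > 0, N ∈ ℕ, let κ₁, …, κ_N > 0 with κ_n ≠ √α for all n, β ∈ ℝ, C ∈ ℂ with |C| = 1, C₁ ∈ ℝ, and let L : ℝ → ℝ be Borel measurable with ∫_ℝ |L(t)|/(1+t²) dt < ∞. Define a on the upper half-plane ℂ₊ by a(k) = C·∏_{n=1}^N (iκ_n − k)/(iκ_n + k) · exp( −iβk + (1/(πi))·∫_ℝ ( 1/(t−k) − t/(1+t²) )·L(t) dt ), and suppose a(i√α) = 1 and a'(i√α) = 2i√α·C₁. Then (1/√α)·∑_{n=1}^N κ_n/(κ_n² − α) + (1/(2α))·∑_{n=1}^N log|(κ_n − √α)/(κ_n + √α)| + (√α/π)·∫_ℝ L(k)/(k²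 + α)² dk = C₁. -/
open MeasureTheory Complex Metric
set_option maxHeartbeats 1000000


/-- First trace formula for strings in the class `F_α`: if `a` has the Nevanlinna
factorization on the upper half-plane with boundary data `L` and zeros `iκ_n` (`κ_n ≠ √α`),
and satisfies `a(i√α) = 1` and `a'(i√α) = 2i√α·C₁`, then
`(1/√α)Σ κ_n/(κ_n²−α) + (1/(2α))Σ log|(κ_n−√α)/(κ_n+√α)| + (√α/π)∫ L(k)/(k²+α)² dk = C₁`. -/
theorem stmt_17 (α : ℝ) (hα : 0 < α) (N : ℕ) (κ : Fin N → ℝ)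
    (hκ : ∀ n, 0 < κ n) (hκα : ∀ n, κ n ≠ Real.sqrt α)
    (β : ℝ) (C : ℂ) (hC : ‖C‖ = 1) (C₁ : ℝ)
    (L : ℝ → ℝ) (hLmeas : Measurable L)
    (hLint : MeasureTheory.Integrable fun t : ℝ => |L t| / (1 + t ^ 2))
    (a : ℂ → ℂ)
    (ha : ∀ k : ℂ, 0 < k.im →
      a k = C * (∏ n, (Complex.I * (κ n : ℂ) - k) / (Complex.I * (κ n : ℂ) + k)) *
        Complex.exp (-Complex.I * (β : ℂ) * k
          + (1 / ((Real.pi : ℂ) * Complex.I)) *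
            ∫ t : ℝ, (1 / ((t : ℂ) - k) - (t : ℂ) / (1 + (t : ℂ) ^ 2)) * (L t : ℂ)))
    (ha0 : a (Complex.I * (Real.sqrt α : ℂ)) = 1)
    (ha1 : deriv a (Complex.I * (Real.sqrt α : ℂ))
      = 2 * Complex.I * (Real.sqrt α : ℂ) * (C₁ : ℂ)) :
    (1 / Real.sqrt α) * (∑ n, κ n / (κ n ^ 2 - α))
      + (1 / (2 * α)) * (∑ n, Real.log (|κ n - Real.sqrt α| / (κ n + Real.sqrt α)))
      + (Real.sqrt α / Real.pi) * (∫ k : ℝ, L k / (k ^ 2 + α) ^ 2) = C₁ := by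
  set s := Real.sqrt α with hsdef
  have hs0 : 0 < s := Real.sqrt_pos.mpr hα
  have hs2 : s^2 = α := Real.sq_sqrt hα.le
  set k₀ : ℂ := Complex.I * (s:ℂ) with hk₀
  have hk₀re : k₀.re = 0 := by simp [hk₀]
  have hk₀im : k₀.im = s := by simp [hk₀]
  -- generic integrability helper
  have hint : ∀ (f : ℝ → ℂ), AEStronglyMeasurable f volume → ∀ M : ℝ,
      (∀ t, ‖f t‖ ≤ M * (|L t| / (1 + t^2))) → Integrable f := by
    intro f hf M h
    exact (hLint.const_mul M).mono' hf (Filter.Eventually.of_forall h)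
  -- abs computations
  have habs1 : ∀ t : ℝ, (‖1 + k₀ * t‖)^2 = 1 + α * t^2 := by
    intro t
    rw [Complex.sq_norm, Complex.normSq_apply]
    simp [hk₀]
    nlinarith [hs2]
  have habs2 : ∀ t : ℝ, (‖(t:ℂ) - k₀‖)^2 = t^2 + α := by
    intro t
    rw [Complex.sq_norm, Complex.normSq_apply]
    simp [hk₀]
    nlinarith [hs2]
  have hden1 : ∀ t : ℝ, (t:ℂ) - k₀ ≠ 0 := by
    intro t h
    have : ((t:ℂ) - k₀).im = 0 := by rw [h]; simp
    simp [hk₀] at this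
    exact hs0.ne' this
  have hden2 : ∀ t : ℝ, ((1:ℂ) + (t:ℂ)^2) ≠ 0 := by
    intro t
    have : ((1:ℂ) + (t:ℂ)^2) = ((1 + t^2 : ℝ) : ℂ) := by push_cast; ring
    rw [this, Complex.ofReal_ne_zero]
    positivity
  -- bound on F k₀
  have hFbound : ∀ t : ℝ, ‖(1 / ((t : ℂ) - k₀) - (t : ℂ) / (1 + (t : ℂ) ^ 2)) * (L t : ℂ)‖
      ≤ ((1+α)/s) * (|L t| / (1 + t^2)) := by
    intro t
    have hiden : 1 / ((t:ℂ) - k₀) - (t:ℂ) / (1 + (t:ℂ)^2)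
        = (1 + k₀ * t) / (((t:ℂ) - k₀) * (1 + (t:ℂ)^2)) := by
      field_simp [hden1 t, hden2 t]
      ring
    have hK : ‖1 + k₀ * t‖ ≤ ((1+α)/s) * ‖(t:ℂ) - k₀‖ := by
      have h2 : (‖1 + k₀ * t‖)^2 ≤ (((1+α)/s) * ‖(t:ℂ) - k₀‖)^2 := by
        rw [habs1, mul_pow, habs2, div_pow, div_mul_eq_mul_div, le_div_iff₀ (by positivity)]
        nlinarith [mul_nonneg hα.le (sq_nonneg t), mul_pos hα hα, mul_pos (mul_pos hα hα) hα, sq_nonneg t]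
      have := Real.sqrt_le_sqrt h2
      rwa [Real.sqrt_sq (norm_nonneg _), Real.sqrt_sq (by positivity)] at this
    rw [hiden]
    have habs1t2 : ‖1 + (t:ℂ)^2‖ = 1 + t^2 := by
      have : ((1:ℂ) + (t:ℂ)^2) = ((1 + t^2 : ℝ) : ℂ) := by push_cast; ring
      rw [this, Complex.norm_real, Real.norm_eq_abs, abs_of_pos (by positivity)]
    have ht2 : (0:ℝ) < 1 + t^2 := by positivity
    have habsden : (0:ℝ) < ‖(t:ℂ) - k₀‖ := norm_pos_iff.mpr (hden1 t)
    calc ‖(1 + k₀ * ↑t) / ((↑t - k₀) * (1 + (t:ℂ)^2)) * ↑(L t)‖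
        = ‖1 + k₀ * t‖ / (‖(t:ℂ) - k₀‖ * (1 + t^2)) * |L t| := by
          simp [norm_mul, norm_div, habs1t2, Complex.norm_real]
      _ ≤ (((1+α)/s) * ‖(t:ℂ) - k₀‖) / (‖(t:ℂ) - k₀‖ * (1 + t^2)) * |L t| := by
          gcongr
      _ = ((1+α)/s) * (|L t| / (1 + t^2)) := by
          field_simp
  have hFint : Integrable (fun t : ℝ => (1 / ((t : ℂ) - k₀) - (t : ℂ) / (1 + (t : ℂ) ^ 2)) * (L t : ℂ)) := by
    apply hint _ (Measurable.aestronglyMeasurable (by fun_prop)) _ hFbound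
  -- derivative bound on the ball
  have hF'bound : ∀ t : ℝ, ∀ k ∈ ball k₀ (s/2),
      ‖(1 / (((t:ℂ) - k)^2)) * (L t : ℂ)‖ ≤ (4*(1+α)/α) * (|L t|/(1+t^2)) := by
    intro t k hk
    have h2 : ‖k - k₀‖ < s/2 := by
      simpa [Complex.dist_eq] using hk
    have hkim : s/2 < k.im := by
      have h1 : |k.im - s| ≤ ‖k - k₀‖ := by
        simpa [Complex.sub_im, hk₀im] using Complex.abs_im_le_norm (k - k₀)
      have := abs_lt.mp (lt_of_le_of_lt h1 h2)
      linarith [this.1]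
    have hkre : (k.re)^2 ≤ α/4 := by
      have h1 : |k.re| ≤ ‖k - k₀‖ := by
        simpa [Complex.sub_re, hk₀re] using Complex.abs_re_le_norm (k - k₀)
      have h3 : |k.re| ≤ s/2 := le_of_lt (lt_of_le_of_lt h1 h2)
      calc (k.re)^2 = |k.re|^2 := (_root_.sq_abs _).symm
        _ ≤ (s/2)^2 := by gcongr
        _ = α/4 := by rw [div_pow, hs2]; ring
    have hnorm : ((t:ℝ) - k.re)^2 + α/4 ≤ (‖(t:ℂ) - k‖)^2 := by
      rw [Complex.sq_norm, Complex.normSq_apply]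
      simp only [Complex.sub_re, Complex.sub_im, Complex.ofReal_re, Complex.ofReal_im]
      nlinarith [hkim, hs0, hs2]
    have hkey : 1 + t^2 ≤ (4*(1+α)/α) * (‖(t:ℂ)-k‖)^2 := by
      calc 1 + t^2 ≤ (4*(1+α)/α) * ((t - k.re)^2 + α/4) := by
            rw [div_mul_eq_mul_div, le_div_iff₀ hα]
            nlinarith [sq_nonneg ((4+3*α)*t - 4*(1+α)*k.re),
              mul_nonneg (by positivity : (0:ℝ) ≤ 4*α*(1+α)) (by linarith : 0 ≤ α/4 - (k.re)^2),
              mul_pos hα hα, mul_pos (mul_pos hα hα) hα, hα.le]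
        _ ≤ _ := by gcongr
    have habsk : 0 < ‖(t:ℂ) - k‖ := by
      apply norm_pos_iff.mpr
      intro h
      have : ((t:ℂ) - k).im = 0 := by rw [h]; simp
      simp at this
      rw [this] at hkim
      linarith [hs0]
    have ht2 : (0:ℝ) < 1 + t^2 := by positivity
    have : ‖(1 / (((t:ℂ) - k)^2)) * (L t : ℂ)‖ = |L t| / (‖(t:ℂ) - k‖)^2 := by
      simp [norm_mul, norm_div, norm_pow, Complex.norm_real]
      ring
    rw [this]
    have hMpos : (0:ℝ) < 4*(1+α)/α := by positivity
    have hle : (1+t^2)/(4*(1+α)/α) ≤ (‖(t:ℂ)-k‖)^2 := by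
      rw [div_le_iff₀ hMpos]
      linarith [hkey]
    calc |L t| / (‖(t:ℂ)-k‖)^2
        ≤ |L t| / ((1+t^2)/(4*(1+α)/α)) := by
          exact div_le_div_of_nonneg_left (abs_nonneg _) (by positivity) hle
      _ = (4*(1+α)/α) * (|L t|/(1+t^2)) := by
          field_simp
  -- parametric derivative
  have hder := hasDerivAt_integral_of_dominated_loc_of_deriv_le
    (F := fun (k : ℂ) (t : ℝ) => (1 / ((t : ℂ) - k) - (t : ℂ) / (1 + (t : ℂ) ^ 2)) * (L t : ℂ))
    (F' := fun (k : ℂ) (t : ℝ) => (1 / (((t:ℂ) - k)^2)) * (L t : ℂ))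
    (μ := volume) (x₀ := k₀) (bound := fun t => (4*(1+α)/α) * (|L t|/(1+t^2)))
    (ball_mem_nhds k₀ (by positivity : (0:ℝ) < s/2))
    (Filter.Eventually.of_forall fun k =>
      Measurable.aestronglyMeasurable (by fun_prop))
    hFint
    (Measurable.aestronglyMeasurable (by fun_prop))
    (Filter.Eventually.of_forall fun t k hk => hF'bound t k hk)
    (hLint.const_mul _)
    (Filter.Eventually.of_forall (fun t => by
      intro k hk
      have hk0 : (t:ℂ) - k ≠ 0 := by
        intro h
        have h2 : ‖k - k₀‖ < s/2 := by simpa [Complex.dist_eq] using hk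
        have hkim : s/2 < k.im := by
          have h1 : |k.im - s| ≤ ‖k - k₀‖ := by
            simpa [Complex.sub_im, hk₀im] using Complex.abs_im_le_norm (k - k₀)
          have := abs_lt.mp (lt_of_le_of_lt h1 h2)
          linarith [this.1]
        have : ((t:ℂ) - k).im = 0 := by rw [h]; simp
        simp at this
        rw [this] at hkim
        linarith [hs0]
      have hd1 : HasDerivAt (fun k : ℂ => (t:ℂ) - k) (-1) k := by
        simpa using (hasDerivAt_id k).const_sub (t:ℂ)
      have hd2 := ((hd1.inv hk0).sub_const ((t:ℂ) / (1 + (t:ℂ)^2))).mul_const ((L t : ℂ))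
      simpa using hd2))
  obtain ⟨hF'int, hIderiv⟩ := hder
  -- per-factor derivatives (test with a given κ)
  have hfd : ∀ κn : ℝ, 0 < κn →
      HasDerivAt (fun k : ℂ => (Complex.I*(κn:ℂ) - k)/(Complex.I*(κn:ℂ) + k))
        (((2*κn/(κn+s)^2 : ℝ):ℂ) * Complex.I) k₀ := by
    intro κn hκn
    have hne : Complex.I*(κn:ℂ) + k₀ ≠ 0 := by
      have h : Complex.I*(κn:ℂ) + k₀ = Complex.I * ((κn + s : ℝ):ℂ) := by
        rw [hk₀]; push_cast; ring
      rw [h]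
      exact mul_ne_zero Complex.I_ne_zero (Complex.ofReal_ne_zero.mpr (by positivity))
    have h1 : HasDerivAt (fun k : ℂ => Complex.I*(κn:ℂ) - k) (-1) k₀ := by
      simpa using (hasDerivAt_id k₀).const_sub (Complex.I*(κn:ℂ))
    have h2 : HasDerivAt (fun k : ℂ => Complex.I*(κn:ℂ) + k) 1 k₀ := by
      simpa using (hasDerivAt_id k₀).const_add (Complex.I*(κn:ℂ))
    have h3 := h1.div h2 hne
    refine h3.congr_deriv (Eq.symm ?_)
    have hκsne : ((κn + s:ℝ):ℂ) ≠ 0 := Complex.ofReal_ne_zero.mpr (by positivity)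
    have hne' : Complex.I*(κn:ℂ) + Complex.I*(s:ℂ) ≠ 0 := by rw [← hk₀]; exact hne
    rw [hk₀, eq_div_iff (pow_ne_zero 2 hne')]
    push_cast
    field_simp
    ring_nf
    have hI3 : Complex.I^3 = -Complex.I := by simp [pow_succ]
    have hq : (κn:ℂ) + (s:ℂ) ≠ 0 := by exact_mod_cast hκsne
    rw [Complex.I_sq]
    field_simp [hq]
    ring
  -- abbreviations
  have hκs : ∀ n, (0:ℝ) < κ n + s := fun n => add_pos (hκ n) hs0
  have hκms : ∀ n, κ n - s ≠ 0 := fun n => sub_ne_zero.mpr (hκα n)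
  set r : Fin N → ℝ := fun n => (κ n - s)/(κ n + s) with hrdef
  have hrne : ∀ n, r n ≠ 0 := fun n => div_ne_zero (hκms n) (hκs n).ne'
  set R : ℝ := ∏ n, r n with hRdef
  have hRne : R ≠ 0 := Finset.prod_ne_zero_iff.mpr (fun n _ => hrne n)
  have hfval : ∀ n, (Complex.I*(κ n:ℂ) - k₀)/(Complex.I*(κ n:ℂ) + k₀) = ((r n : ℝ):ℂ) := by
    intro n
    have hd1 : Complex.I*(κ n:ℂ) + k₀ ≠ 0 := by
      have h : Complex.I*(κ n:ℂ) + k₀ = Complex.I * ((κ n + s : ℝ):ℂ) := by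
        rw [hk₀]; push_cast; ring
      rw [h]
      exact mul_ne_zero Complex.I_ne_zero (Complex.ofReal_ne_zero.mpr (hκs n).ne')
    have hd2 : ((κ n + s : ℝ):ℂ) ≠ 0 := Complex.ofReal_ne_zero.mpr (hκs n).ne'
    have hd2' : ((κ n:ℂ) + (s:ℂ)) ≠ 0 := by
      rw [← Complex.ofReal_add]; exact hd2
    rw [hrdef]
    push_cast
    rw [div_eq_div_iff hd1 hd2', hk₀]
    ring
  have hprod : ∀ u : Finset (Fin N),
      (∏ j ∈ u, (Complex.I*(κ j:ℂ) - k₀)/(Complex.I*(κ j:ℂ) + k₀)) = ((∏ j ∈ u, r j : ℝ):ℂ) := by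
    intro u
    rw [Complex.ofReal_prod]
    exact Finset.prod_congr rfl (fun j _ => hfval j)
  -- derivative of the Blaschke product
  have hB := HasDerivAt.fun_finsetProd (u := Finset.univ) (x := k₀)
    (f := fun n (k:ℂ) => (Complex.I*(κ n:ℂ) - k)/(Complex.I*(κ n:ℂ) + k))
    (f' := fun n => ((2*κ n/(κ n+s)^2 : ℝ):ℂ) * Complex.I)
    (fun n _ => hfd (κ n) (hκ n))
  -- derivative of the exponent
  set c : ℂ := 1 / ((Real.pi : ℂ) * Complex.I) with hcdef
  set J : ℂ := ∫ t : ℝ, 1/(((t:ℂ) - k₀)^2) * (L t : ℂ) with hJdef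
  set I₀ : ℂ := ∫ t : ℝ, (1/((t:ℂ)-k₀) - (t:ℂ)/(1+(t:ℂ)^2)) * (L t:ℂ) with hI₀def
  have hexp1 : HasDerivAt (fun k : ℂ => -Complex.I * (β:ℂ) * k) (-Complex.I * (β:ℂ)) k₀ := by
    simpa using (hasDerivAt_id k₀).const_mul (-Complex.I * (β:ℂ))
  have hexparg : HasDerivAt (fun k : ℂ => -Complex.I * (β:ℂ) * k
      + c * ∫ t : ℝ, (1/((t:ℂ)-k) - (t:ℂ)/(1+(t:ℂ)^2)) * (L t:ℂ))
      (-Complex.I * (β:ℂ) + c * J) k₀ := hexp1.add (hIderiv.const_mul c)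
  have hexp := hexparg.cexp
  have hFull := (hB.const_mul C).mul hexp
  -- identify deriv a
  have hopen : IsOpen {z : ℂ | 0 < z.im} := isOpen_lt continuous_const Complex.continuous_im
  have hk₀mem : (0:ℝ) < k₀.im := by rw [hk₀im]; exact hs0
  have haeq : a =ᶠ[nhds k₀] (fun k : ℂ => C * (∏ n, (Complex.I * (κ n : ℂ) - k) / (Complex.I * (κ n : ℂ) + k)) *
      Complex.exp (-Complex.I * (β : ℂ) * k
        + c * ∫ t : ℝ, (1 / ((t : ℂ) - k) - (t : ℂ) / (1 + (t : ℂ) ^ 2)) * (L t : ℂ))) := by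
    filter_upwards [hopen.mem_nhds hk₀mem] with z hz
    exact ha z hz
  have hderiva : deriv a k₀ = C * (∑ n, (∏ j ∈ Finset.univ.erase n,
        (Complex.I*(κ j:ℂ) - k₀)/(Complex.I*(κ j:ℂ) + k₀)) • (((2*κ n/(κ n+s)^2 : ℝ):ℂ) * Complex.I))
        * Complex.exp (-Complex.I * (β:ℂ) * k₀ + c * I₀)
      + (C * ∏ n, (Complex.I*(κ n:ℂ) - k₀)/(Complex.I*(κ n:ℂ) + k₀))
        * (Complex.exp (-Complex.I * (β:ℂ) * k₀ + c * I₀) * (-Complex.I * (β:ℂ) + c * J)) := by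
    rw [haeq.deriv_eq]
    exact hFull.deriv
  have hF0 : C * ((R:ℝ):ℂ) * Complex.exp (-Complex.I * (β:ℂ) * k₀ + c * I₀) = 1 := by
    rw [← hprod Finset.univ, ← ha k₀ hk₀mem]
    exact ha0
  set E₀ : ℂ := Complex.exp (-Complex.I * (β:ℂ) * k₀ + c * I₀) with hE₀def
  set S' : ℝ := ∑ n, κ n / (κ n ^ 2 - α) with hS'def
  have hCE : C * E₀ = (((R:ℝ):ℂ))⁻¹ := by
    apply eq_inv_of_mul_eq_one_left
    rw [← hF0]; ring
  have hterm : ∀ n : Fin N, ((∏ j ∈ Finset.univ.erase n,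
        (Complex.I*(κ j:ℂ) - k₀)/(Complex.I*(κ j:ℂ) + k₀)) • (((2*κ n/(κ n+s)^2 : ℝ):ℂ) * Complex.I)) * (C * E₀)
      = ((2*(κ n/(κ n^2 - α)) : ℝ):ℂ) * Complex.I := by
    intro n
    rw [smul_eq_mul, hprod, hCE]
    have hern : (∏ j ∈ Finset.univ.erase n, r j) ≠ 0 :=
      Finset.prod_ne_zero_iff.mpr (fun j _ => hrne j)
    have hreal : (∏ j ∈ Finset.univ.erase n, r j) * (2*κ n/(κ n+s)^2) / R
        = 2*(κ n/(κ n^2 - α)) := by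
      have hRfac : R = r n * ∏ j ∈ Finset.univ.erase n, r j :=
        (Finset.mul_prod_erase Finset.univ r (Finset.mem_univ n)).symm
      have h1 : κ n ^ 2 - α = (κ n - s) * (κ n + s) := by rw [← hs2]; ring
      rw [hRfac, mul_comm (r n), mul_div_mul_left _ _ hern, h1, hrdef]
      field_simp [hκms n, (hκs n).ne']
    rw [← hreal]
    push_cast
    ring
  have h2nd : (C * ∏ n, (Complex.I*(κ n:ℂ) - k₀)/(Complex.I*(κ n:ℂ) + k₀))
      * (E₀ * (-Complex.I * (β:ℂ) + c * J)) = (-Complex.I * (β:ℂ) + c * J) := by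
    rw [hprod]
    calc (C * (↑R:ℂ)) * (E₀ * (-Complex.I * (β:ℂ) + c * J))
        = (C * (↑R:ℂ) * E₀) * (-Complex.I * (β:ℂ) + c * J) := by ring
      _ = _ := by rw [hF0]; ring
  have h1st : C * (∑ n, (∏ j ∈ Finset.univ.erase n,
        (Complex.I*(κ j:ℂ) - k₀)/(Complex.I*(κ j:ℂ) + k₀)) • (((2*κ n/(κ n+s)^2 : ℝ):ℂ) * Complex.I)) * E₀
      = ((2*S' : ℝ):ℂ) * Complex.I := by
    calc C * (∑ n, (∏ j ∈ Finset.univ.erase n,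
          (Complex.I*(κ j:ℂ) - k₀)/(Complex.I*(κ j:ℂ) + k₀)) • (((2*κ n/(κ n+s)^2 : ℝ):ℂ) * Complex.I)) * E₀
        = ∑ n, ((∏ j ∈ Finset.univ.erase n,
            (Complex.I*(κ j:ℂ) - k₀)/(Complex.I*(κ j:ℂ) + k₀)) • (((2*κ n/(κ n+s)^2 : ℝ):ℂ) * Complex.I)) * (C * E₀) := by
          rw [Finset.mul_sum, Finset.sum_mul]
          exact Finset.sum_congr rfl (fun n _ => by ring)
      _ = ∑ n, ((2*(κ n/(κ n^2-α)) : ℝ):ℂ) * Complex.I :=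
          Finset.sum_congr rfl (fun n _ => hterm n)
      _ = ((2*S' : ℝ):ℂ) * Complex.I := by
          rw [← Finset.sum_mul]
          congr 1
          rw [hS'def]
          push_cast
          rw [Finset.mul_sum]
  have hD2 : ((2*S' : ℝ):ℂ) * Complex.I + (-Complex.I * (β:ℂ) + c * J)
      = 2*Complex.I*(s:ℂ)*(C₁:ℂ) := by
    rw [← h1st, ← h2nd, ← hderiva]
    exact ha1
  -- real integrals
  set T1 : ℝ := ∫ t : ℝ, L t / (t^2 + α) with hT1def
  set T2 : ℝ := ∫ t : ℝ, L t * ((t^2 - α)/(t^2 + α)^2) with hT2def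
  set T3 : ℝ := ∫ t : ℝ, L t / (t^2 + α)^2 with hT3def
  have hrint : ∀ (f : ℝ → ℝ), AEStronglyMeasurable f volume → ∀ M : ℝ,
      (∀ t, |f t| ≤ M * (|L t| / (1 + t^2))) → Integrable f := by
    intro f hf M h
    exact (hLint.const_mul M).mono' hf (Filter.Eventually.of_forall (fun t => by
      rw [Real.norm_eq_abs]; exact h t))
  have hαt : ∀ t : ℝ, (0:ℝ) < t^2 + α := fun t => by positivity
  have hkey3 : ∀ t : ℝ, α * (1 + t^2) ≤ (1+α) * (t^2+α) := by
    intro t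
    nlinarith [mul_nonneg hα.le (sq_nonneg t), sq_nonneg t, mul_pos hα hα]
  have hg1b : ∀ t : ℝ, |L t / (t^2+α)| ≤ ((1+α)/α) * (|L t|/(1+t^2)) := by
    intro t
    have h2 : (0:ℝ) < 1 + t^2 := by positivity
    rw [abs_div, abs_of_pos (hαt t), ← mul_div_assoc, div_le_div_iff₀ (hαt t) h2,
      div_mul_eq_mul_div, div_mul_eq_mul_div, le_div_iff₀ hα]
    nlinarith [mul_le_mul_of_nonneg_left (hkey3 t) (abs_nonneg (L t))]
  have hg3b : ∀ t : ℝ, |L t / (t^2+α)^2| ≤ ((1+α)/α^2) * (|L t|/(1+t^2)) := by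
    intro t
    have h2 : (0:ℝ) < 1 + t^2 := by positivity
    have key : α^2*(1+t^2) ≤ (1+α)*((t^2+α)^2) := by
      nlinarith [hkey3 t, hαt t, sq_nonneg t, mul_le_mul_of_nonneg_left (hkey3 t) hα.le,
        mul_le_mul_of_nonneg_right (by nlinarith [sq_nonneg t] : α ≤ t^2+α)
          (by positivity : (0:ℝ) ≤ (1+α)*(t^2+α))]
    rw [abs_div, abs_of_pos (by positivity : (0:ℝ) < (t^2+α)^2), ← mul_div_assoc,
      div_le_div_iff₀ (by positivity) h2, div_mul_eq_mul_div, div_mul_eq_mul_div,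
      le_div_iff₀ (by positivity : (0:ℝ) < α^2)]
    nlinarith [mul_le_mul_of_nonneg_left key (abs_nonneg (L t))]
  have hg2b : ∀ t : ℝ, |L t * ((t^2-α)/(t^2+α)^2)| ≤ ((1+α)/α) * (|L t|/(1+t^2)) := by
    intro t
    have habs : |t^2 - α| ≤ t^2 + α :=
      abs_le.mpr ⟨by nlinarith [sq_nonneg t], by nlinarith [sq_nonneg t]⟩
    have hX : |t^2-α|/(t^2+α)^2 ≤ 1/(t^2+α) := by
      rw [div_le_div_iff₀ (by positivity) (hαt t)]
      nlinarith [mul_le_mul_of_nonneg_right habs (hαt t).le]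
    have h1 : |L t * ((t^2-α)/(t^2+α)^2)| ≤ |L t / (t^2+α)| := by
      rw [abs_mul, abs_div, abs_of_pos (by positivity : (0:ℝ) < (t^2+α)^2),
        abs_div, abs_of_pos (hαt t)]
      calc |L t| * (|t^2-α|/(t^2+α)^2) ≤ |L t| * (1/(t^2+α)) :=
            mul_le_mul_of_nonneg_left hX (abs_nonneg _)
        _ = |L t|/(t^2+α) := by ring
    exact le_trans h1 (hg1b t)
  have hg1int : Integrable (fun t : ℝ => L t / (t^2+α)) :=
    hrint _ (Measurable.aestronglyMeasurable (by fun_prop)) _ hg1b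
  have hg2int : Integrable (fun t : ℝ => L t * ((t^2-α)/(t^2+α)^2)) :=
    hrint _ (Measurable.aestronglyMeasurable (by fun_prop)) _ hg2b
  have hg3int : Integrable (fun t : ℝ => L t / (t^2+α)^2) :=
    hrint _ (Measurable.aestronglyMeasurable (by fun_prop)) _ hg3b
  -- splitting identity
  have e3 : T1 = T2 + 2*α*T3 := by
    rw [hT1def, hT2def, hT3def]
    have h1 : (fun t : ℝ => L t / (t^2+α)) = fun t : ℝ => L t * ((t^2-α)/(t^2+α)^2) + (2*α) * (L t/(t^2+α)^2) := by
      funext t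
      have := (hαt t).ne'
      field_simp
      ring
    rw [h1, integral_add hg2int ((hg3int.const_mul (2*α)) : Integrable (fun t : ℝ => (2*α) * (L t/(t^2+α)^2)))]
    rw [integral_const_mul]
  -- J.re = T2
  have hF'int' : Integrable (fun t : ℝ => 1/(((t:ℂ)-k₀)^2) * (L t:ℂ)) volume := hF'int
  have hJre : J.re = T2 := by
    have h0 : J.re = ∫ t : ℝ, (1/(((t:ℂ) - k₀)^2) * (L t : ℂ)).re := by
      rw [hJdef]
      exact (integral_re hF'int').symm
    rw [h0, hT2def]
    apply integral_congr_ae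
    apply Filter.Eventually.of_forall
    intro t
    dsimp only
    have hzre : (1/(((t:ℂ) - k₀)^2)).re = (t^2-α)/(t^2+α)^2 := by
      rw [hk₀, one_div, Complex.inv_re]
      rw [← hs2]
      simp [Complex.normSq_apply, Complex.sub_re, Complex.sub_im, Complex.mul_re, Complex.mul_im, pow_two]
      try ring
    rw [Complex.mul_re, Complex.ofReal_re, Complex.ofReal_im, hzre]
    ring
  -- I₀.im = s*T1
  have hI₀im : I₀.im = s*T1 := by
    have h0 : I₀.im = ∫ t : ℝ, ((1/((t:ℂ)-k₀) - (t:ℂ)/(1+(t:ℂ)^2)) * (L t:ℂ)).im := by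
      rw [hI₀def]
      exact (integral_im hFint).symm
    rw [h0]
    have h1 : (fun t : ℝ => ((1/((t:ℂ)-k₀) - (t:ℂ)/(1+(t:ℂ)^2)) * (L t:ℂ)).im)
        = fun t : ℝ => s * (L t / (t^2+α)) := by
      funext t
      have hzim : (1/((t:ℂ) - k₀)).im = s/(t^2+α) := by
        rw [hk₀, one_div, Complex.inv_im]
        rw [← hs2]
        simp [Complex.normSq_apply, Complex.sub_re, Complex.sub_im, Complex.mul_re, Complex.mul_im, pow_two]
        try ring
      have hz2im : ((t:ℂ)/(1+(t:ℂ)^2)).im = 0 := by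
        have : ((t:ℂ)/(1+(t:ℂ)^2)) = ((t/(1+t^2) : ℝ) : ℂ) := by push_cast; ring
        rw [this, Complex.ofReal_im]
      rw [Complex.mul_im, Complex.ofReal_re, Complex.ofReal_im, Complex.sub_im, hzim, hz2im]
      have := (hαt t).ne'
      field_simp
      ring
    rw [h1, integral_const_mul, hT1def]
  -- equation (1): modulus at k₀
  have hπ0 : Real.pi ≠ 0 := Real.pi_ne_zero
  have hcI : c = ((Real.pi⁻¹ : ℝ):ℂ) * (-Complex.I) := by
    rw [hcdef, one_div, mul_inv, Complex.inv_I]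
    push_cast
    ring
  have hw : (-Complex.I * (β:ℂ) * k₀ + c * I₀).re = β*s + Real.pi⁻¹ * I₀.im := by
    have h1 : -Complex.I * (β:ℂ) * k₀ = ((β*s:ℝ):ℂ) := by
      rw [hk₀]
      push_cast
      linear_combination (-(β:ℂ)*(s:ℂ)) * Complex.I_sq
    rw [h1, hcI, Complex.add_re, Complex.ofReal_re]
    obtain ⟨p, q, hpq⟩ : ∃ p q : ℝ, I₀ = ↑p + ↑q*Complex.I :=
      ⟨I₀.re, I₀.im, (Complex.re_add_im I₀).symm⟩
    rw [hpq]
    simp [Complex.mul_re, Complex.mul_im, Complex.add_re, Complex.add_im]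
    try ring
  have habsF0 := congrArg norm hF0
  rw [norm_mul, norm_mul, hC, one_mul, Complex.norm_real, Real.norm_eq_abs, Complex.norm_exp, hw, norm_one] at habsF0
  have hlog := congrArg Real.log habsF0
  rw [Real.log_mul (abs_ne_zero.mpr hRne) (Real.exp_ne_zero _), Real.log_exp, Real.log_one] at hlog
  set Λ : ℝ := ∑ n, Real.log (|κ n - s| / (κ n + s)) with hΛdef
  have hlogR : Real.log |R| = Λ := by
    rw [hRdef, Finset.abs_prod, Real.log_prod (fun n _ => abs_ne_zero.mpr (hrne n)), hΛdef]
    refine Finset.sum_congr rfl (fun n _ => ?_)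
    have hrn : r n = (κ n - s)/(κ n + s) := rfl
    rw [hrn, abs_div, abs_of_pos (hκs n)]
  rw [hlogR, hI₀im] at hlog
  -- hlog : Λ + (β*s + π⁻¹*(s*T1)) = 0
  -- equation (2): imaginary part of derivative relation
  have him := congrArg Complex.im hD2
  rw [hcI] at him
  obtain ⟨p, q, hpq⟩ : ∃ p q : ℝ, J = ↑p + ↑q*Complex.I :=
    ⟨J.re, J.im, (Complex.re_add_im J).symm⟩
  have hp : J.re = p := by rw [hpq]; simp
  rw [hpq] at him
  simp [Complex.add_im, Complex.sub_im, Complex.mul_im, Complex.mul_re,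
    Complex.I_re, Complex.I_im, Complex.ofReal_re, Complex.ofReal_im,
    Complex.neg_im, Complex.neg_re] at him
  have e2 : 2*S' - β - Real.pi⁻¹ * T2 = 2*(s*C₁) := by
    rw [← hJre, hp]
    linarith [him]
  -- final algebra
  have f1 : Real.pi*Λ + Real.pi*(β*s) + s*T1 = 0 := by
    have h2 := congrArg (fun x : ℝ => Real.pi * x) hlog
    rw [mul_zero, mul_add, mul_add, ← mul_assoc Real.pi Real.pi⁻¹, mul_inv_cancel₀ hπ0, one_mul] at h2
    linarith [h2]
  have f2 : Real.pi*(2*S') - Real.pi*β - T2 = Real.pi*(2*(s*C₁)) := by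
    have h2 := congrArg (fun x : ℝ => Real.pi * x) e2
    rw [mul_sub, mul_sub, ← mul_assoc Real.pi Real.pi⁻¹, mul_inv_cancel₀ hπ0, one_mul] at h2
    linarith [h2]
  have e3' : T1 = T2 + 2*s^2*T3 := by rw [hs2]; exact e3
  have main : 2*s*Real.pi*S' + Real.pi*Λ + 2*s^3*T3 = 2*s^2*Real.pi*C₁ := by
    linear_combination s*f2 + f1 - s*e3'
  rw [← hs2]
  have hsne : s ≠ 0 := hs0.ne'
  field_simp
  linear_combination main
end

section
/- Let u : [0,∞) → ℝ and g, h : [0,∞) → ℂ be continuously differentiable with h compactly supported. Define W_S(t) = u(0) − (u'(log(1+t)) + u(log(1+t)))/(1+t), f(t) = g(log(1+t))·√(1+t) and h_S(t) = h(log(1+t))·√(1+t) for t ∈ [0,∞). Then ∫₀^∞ W_S(t)·(f·h_S)'(t) dt = −∫₀^∞ u(x)·g(x)·h(x) dx − ∫₀^∞ u'(x)·(g·h)'(x) dx. -/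
open MeasureTheory Set Filter

/-- Substitution-and-integration-by-parts identity for the pairing of the transformed
coefficient `W_S(t) = u(0) − (u'(log(1+t)) + u(log(1+t)))/(1+t)` with `f·h_S`, where
`f(t) = g(log(1+t))√(1+t)` and `h_S(t) = h(log(1+t))√(1+t)`:
`∫₀^∞ W_S (f h_S)' = −∫₀^∞ u g h − ∫₀^∞ u' (g h)'`. -/
theorem stmt_19 (u u' : ℝ → ℝ) (g h g' h' : ℝ → ℂ)
    (hu : ∀ x ∈ Set.Ici (0:ℝ), HasDerivWithinAt u (u' x) (Set.Ici 0) x)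
    (hu'c : ContinuousOn u' (Set.Ici 0))
    (hg : ∀ x ∈ Set.Ici (0:ℝ), HasDerivWithinAt g (g' x) (Set.Ici 0) x)
    (hg'c : ContinuousOn g' (Set.Ici 0))
    (hh : ∀ x ∈ Set.Ici (0:ℝ), HasDerivWithinAt h (h' x) (Set.Ici 0) x)
    (hh'c : ContinuousOn h' (Set.Ici 0))
    (hsupp : HasCompactSupport h)
    (WS : ℝ → ℝ) (f hS : ℝ → ℂ)
    (hWS : ∀ t : ℝ, 0 ≤ t →
      WS t = u 0 - (u' (Real.log (1 + t)) + u (Real.log (1 + t))) / (1 + t))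
    (hf : ∀ t : ℝ, 0 ≤ t → f t = g (Real.log (1 + t)) * (Real.sqrt (1 + t) : ℂ))
    (hhS : ∀ t : ℝ, 0 ≤ t → hS t = h (Real.log (1 + t)) * (Real.sqrt (1 + t) : ℂ)) :
    ∫ t in Set.Ioi (0:ℝ), (WS t : ℂ) * derivWithin (fun s => f s * hS s) (Set.Ici 0) t
      = -(∫ x in Set.Ioi (0:ℝ), (u x : ℂ) * g x * h x)
        - ∫ x in Set.Ioi (0:ℝ), (u' x : ℂ) * derivWithin (fun s => g s * h s) (Set.Ici 0) x := by
  classical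
  set φ : ℝ → ℂ := fun x => g x * h x with hφdef
  set ψ : ℝ → ℂ := fun x => g' x * h x + g x * h' x with hψdef
  have hφ : ∀ x ∈ Set.Ici (0:ℝ), HasDerivWithinAt φ (ψ x) (Set.Ici 0) x :=
    fun x hx => (hg x hx).mul (hh x hx)
  have hgc : ContinuousOn g (Set.Ici 0) := fun x hx => (hg x hx).continuousWithinAt
  have hhc : ContinuousOn h (Set.Ici 0) := fun x hx => (hh x hx).continuousWithinAt
  have huc : ContinuousOn u (Set.Ici 0) := fun x hx => (hu x hx).continuousWithinAt
  have hφc : ContinuousOn φ (Set.Ici 0) := hgc.mul hhc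
  have hψc : ContinuousOn ψ (Set.Ici 0) := (hg'c.mul hhc).add (hgc.mul hh'c)
  -- support bound
  obtain ⟨r, hr⟩ := hsupp.isBounded.subset_closedBall 0
  set M : ℝ := max r 1 with hMdef
  have hM1 : (1:ℝ) ≤ M := le_max_right _ _
  have hhz : ∀ x : ℝ, M < x → h x = 0 := by
    intro x hx
    apply image_eq_zero_of_notMem_tsupport
    intro hmem
    have := hr hmem
    simp only [Metric.mem_closedBall, Real.dist_eq, sub_zero] at this
    have : x ≤ r := (le_abs_self x).trans this
    have : r ≤ M := le_max_left _ _
    linarith [(le_abs_self x).trans (by simpa [Real.dist_eq] using hr hmem)]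
  have hh'z : ∀ x : ℝ, M < x → h' x = 0 := by
    intro x hx
    have hx0 : (0:ℝ) < x := lt_of_lt_of_le one_pos (le_of_lt (lt_of_le_of_lt hM1 hx))
    have hnm : x ∉ tsupport h := by
      intro hmem
      have := (le_abs_self x).trans (by simpa [Real.dist_eq] using hr hmem)
      have : r ≤ M := le_max_left _ _
      linarith [(le_abs_self x).trans (by simpa [Real.dist_eq] using hr hmem)]
    have hev : h =ᶠ[nhds x] fun _ => 0 := notMem_tsupport_iff_eventuallyEq.mp hnm
    have h1 : HasDerivAt h 0 x := (hasDerivAt_const x (0:ℂ)).congr_of_eventuallyEq hev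
    have h2 : HasDerivAt h (h' x) x :=
      (hh x (le_of_lt hx0)).hasDerivAt (Ici_mem_nhds hx0)
    exact h2.unique h1
  have hφz : ∀ x : ℝ, M < x → φ x = 0 := fun x hx => by simp [hφdef, hhz x hx]
  have hψz : ∀ x : ℝ, M < x → ψ x = 0 := fun x hx => by
    simp [hψdef, hhz x hx, hh'z x hx]
  -- integrability helper
  have key : ∀ F : ℝ → ℂ, ContinuousOn F (Set.Ici 0) → (∀ x : ℝ, M < x → F x = 0) →
      IntegrableOn F (Set.Ioi 0) := by
    intro F hc hz
    have h1 : IntegrableOn F (Set.Icc 0 M) :=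
      (hc.mono (Set.Icc_subset_Ici_self)).integrableOn_Icc
    refine h1.of_forall_diff_eq_zero measurableSet_Ioi ?_
    intro x hx
    simp only [Set.mem_diff, Set.mem_Ioi, Set.mem_Icc, not_and, not_le] at hx
    exact hz x (hx.2 hx.1.le)
  have hucC : ContinuousOn (fun x => ((u x : ℝ) : ℂ)) (Set.Ici 0) :=
    Complex.continuous_ofReal.comp_continuousOn huc
  have hu'cC : ContinuousOn (fun x => ((u' x : ℝ) : ℂ)) (Set.Ici 0) :=
    Complex.continuous_ofReal.comp_continuousOn hu'c
  have intA : IntegrableOn (fun x => (u x : ℂ) * φ x) (Set.Ioi 0) :=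
    key _ (hucC.mul hφc) (fun x hx => by simp [hφz x hx])
  have intB : IntegrableOn (fun x => (u' x : ℂ) * ψ x) (Set.Ioi 0) :=
    key _ (hu'cC.mul hψc) (fun x hx => by simp [hψz x hx])
  have intC : IntegrableOn (fun x => (u' x : ℂ) * φ x) (Set.Ioi 0) :=
    key _ (hu'cC.mul hφc) (fun x hx => by simp [hφz x hx])
  have intD : IntegrableOn (fun x => (u x : ℂ) * ψ x) (Set.Ioi 0) :=
    key _ (hucC.mul hψc) (fun x hx => by simp [hψz x hx])
  have intIbp : IntegrableOn (fun x => (u' x : ℂ) * φ x + (u x : ℂ) * ψ x) (Set.Ioi 0) :=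
    intC.add intD
  have intP : IntegrableOn (fun x => (u 0 : ℂ) * Real.exp x * (ψ x + φ x)) (Set.Ioi 0) := by
    refine key _ ?_ (fun x hx => by simp [hφz x hx, hψz x hx])
    exact ((continuousOn_const.mul
      (Complex.continuous_ofReal.comp Real.continuous_exp).continuousOn).mul (hψc.add hφc))
  -- integration by parts: ∫ (u φ)' = - u 0 * φ 0
  have ibp : ∫ x in Set.Ioi (0:ℝ), ((u' x : ℂ) * φ x + (u x : ℂ) * ψ x)
      = -((u 0 : ℂ) * φ 0) := by
    have := integral_Ioi_of_hasDerivAt_of_tendsto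
      (f := fun x => (u x : ℂ) * φ x)
      (f' := fun x => (u' x : ℂ) * φ x + (u x : ℂ) * ψ x) (a := 0) (m := 0)
      ((hucC.mul hφc) 0 Set.self_mem_Ici)
      (fun x hx => by
        have hx' : (0:ℝ) < x := hx
        have h1 : HasDerivAt u (u' x) x := (hu x hx'.le).hasDerivAt (Ici_mem_nhds hx')
        have h2 : HasDerivAt φ (ψ x) x := (hφ x hx'.le).hasDerivAt (Ici_mem_nhds hx')
        exact h1.ofReal_comp.mul h2)
      intIbp
      (by
        refine Tendsto.congr' ?_ tendsto_const_nhds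
        filter_upwards [eventually_ge_atTop (M + 1)] with x hx
        simp [hφz x (by linarith)])
    simpa using this
  -- ∫ (u0 e^x φ)' = - u 0 * φ 0
  have expint : ∫ x in Set.Ioi (0:ℝ), (u 0 : ℂ) * Real.exp x * (ψ x + φ x)
      = -((u 0 : ℂ) * φ 0) := by
    have := integral_Ioi_of_hasDerivAt_of_tendsto
      (f := fun x => (u 0 : ℂ) * Real.exp x * φ x)
      (f' := fun x => (u 0 : ℂ) * Real.exp x * (ψ x + φ x)) (a := 0) (m := 0)
      ((continuousOn_const.mul
        (Complex.continuous_ofReal.comp Real.continuous_exp).continuousOn).mul hφc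
        0 Set.self_mem_Ici)
      (fun x hx => by
        have hx' : (0:ℝ) < x := hx
        have h2 : HasDerivAt φ (ψ x) x := (hφ x hx'.le).hasDerivAt (Ici_mem_nhds hx')
        have h1 : HasDerivAt (fun x : ℝ => ((Real.exp x : ℝ) : ℂ)) (Real.exp x) x :=
          (Real.hasDerivAt_exp x).ofReal_comp
        have := (h1.const_mul ((u 0 : ℂ))).mul h2
        exact this.congr_deriv (by ring))
      intP
      (by
        refine Tendsto.congr' ?_ tendsto_const_nhds
        filter_upwards [eventually_ge_atTop (M + 1)] with x hx
        simp [hφz x (by linarith)])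
    simpa [Real.exp_zero] using this
  -- compute derivWithin (g*h)
  have hderivφ : ∀ x ∈ Set.Ioi (0:ℝ),
      derivWithin φ (Set.Ici 0) x = ψ x := by
    intro x hx
    have hx' : (0:ℝ) ≤ x := le_of_lt hx
    exact ((hg x hx').mul (hh x hx')).derivWithin (uniqueDiffOn_Ici 0 x hx')
  -- rewrite LHS integrand
  have hLHS : ∀ t ∈ Set.Ioi (0:ℝ),
      (WS t : ℂ) * derivWithin (fun s => f s * hS s) (Set.Ici 0) t
      = ((u 0 - (u' (Real.log (1 + t)) + u (Real.log (1 + t))) / (1 + t) : ℝ) : ℂ)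
          * (ψ (Real.log (1 + t)) + φ (Real.log (1 + t))) := by
    intro t ht
    have ht' : (0:ℝ) ≤ t := le_of_lt ht
    have hEq : Set.EqOn (fun s => f s * hS s)
        (fun s => φ (Real.log (1 + s)) * ((1 + s : ℝ) : ℂ)) (Set.Ici 0) := by
      intro s hs
      have hs' : (0:ℝ) ≤ s := hs
      have hsq : (Real.sqrt (1 + s) : ℂ) * (Real.sqrt (1 + s) : ℂ) = ((1 + s : ℝ) : ℂ) := by
        rw [← Complex.ofReal_mul, Real.mul_self_sqrt (by linarith)]
      simp only [hf s hs', hhS s hs', hφdef]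
      rw [show g (Real.log (1 + s)) * (Real.sqrt (1 + s) : ℂ)
          * (h (Real.log (1 + s)) * (Real.sqrt (1 + s) : ℂ))
          = g (Real.log (1 + s)) * h (Real.log (1 + s))
            * ((Real.sqrt (1 + s) : ℂ) * (Real.sqrt (1 + s) : ℂ)) from by ring, hsq]
    rw [derivWithin_congr hEq (hEq ht')]
    have h1t : (0:ℝ) < 1 + t := by linarith
    have hLder : HasDerivWithinAt (fun s : ℝ => Real.log (1 + s)) (1 / (1 + t))
        (Set.Ici 0) t := by
      have h1 : HasDerivAt (fun s : ℝ => 1 + s) 1 t := (hasDerivAt_id t).const_add 1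
      have := (Real.hasDerivAt_log (ne_of_gt h1t)).comp t h1
      simpa [one_div, Function.comp_def] using this.hasDerivWithinAt
    have hmaps : Set.MapsTo (fun s : ℝ => Real.log (1 + s)) (Set.Ici 0) (Set.Ici 0) := by
      intro s hs
      have hs' : (0:ℝ) ≤ s := hs
      exact Real.log_nonneg (by linarith)
    have hcomp : HasDerivWithinAt (fun s : ℝ => φ (Real.log (1 + s)))
        ((1 / (1 + t)) • ψ (Real.log (1 + t))) (Set.Ici 0) t :=
      HasDerivWithinAt.scomp t (hφ _ (hmaps ht')) hLder hmaps
    have hc2 : HasDerivWithinAt (fun s : ℝ => ((1 + s : ℝ) : ℂ)) 1 (Set.Ici 0) t := by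
      have : HasDerivAt (fun s : ℝ => ((1 + s : ℝ) : ℂ)) ((1:ℝ) : ℂ) t :=
        ((hasDerivAt_id t).const_add (1:ℝ)).ofReal_comp
      simpa using this.hasDerivWithinAt
    have hF := hcomp.mul hc2
    rw [show (fun s : ℝ => φ (Real.log (1 + s)) * ((1 + s : ℝ) : ℂ)) = (fun s : ℝ => φ (Real.log (1 + s))) * (fun s : ℝ => ((1 + s : ℝ) : ℂ)) from rfl]
    rw [hF.derivWithin (uniqueDiffOn_Ici 0 t ht')]
    rw [hWS t ht']
    have hne : ((1 + t : ℝ) : ℂ) ≠ 0 := Complex.ofReal_ne_zero.mpr (ne_of_gt h1t)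
    rw [Complex.real_smul]
    push_cast
    have hne' : (1 : ℂ) + (t : ℂ) ≠ 0 := by push_cast at hne; exact hne
    field_simp
  rw [MeasureTheory.setIntegral_congr_fun measurableSet_Ioi hLHS]
  -- change of variables t = e^x - 1
  have himg : (fun x : ℝ => Real.exp x - 1) '' (Set.Ioi 0) = Set.Ioi 0 := by
    ext y
    simp only [Set.mem_image, Set.mem_Ioi]
    constructor
    · rintro ⟨x, hx, rfl⟩
      have : (1:ℝ) < Real.exp x := by
        rw [← Real.exp_zero]; exact Real.exp_lt_exp.mpr hx
      linarith
    · intro hy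
      exact ⟨Real.log (1 + y), Real.log_pos (by linarith),
        by rw [Real.exp_log (by linarith)]; ring⟩
  set G : ℝ → ℂ := fun t =>
    ((u 0 - (u' (Real.log (1 + t)) + u (Real.log (1 + t))) / (1 + t) : ℝ) : ℂ)
      * (ψ (Real.log (1 + t)) + φ (Real.log (1 + t))) with hGdef
  have hsub : ∫ t in Set.Ioi (0:ℝ), G t
      = ∫ x in Set.Ioi (0:ℝ), |Real.exp x| • G (Real.exp x - 1) := by
    conv_lhs => rw [← himg]
    exact integral_image_eq_integral_abs_deriv_smul measurableSet_Ioi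
      (fun x _ => ((Real.hasDerivAt_exp x).sub_const 1).hasDerivWithinAt)
      (fun a _ b _ hab => Real.exp_injective (by linarith)) G
  rw [hsub]
  have hGx : ∀ x : ℝ, |Real.exp x| • G (Real.exp x - 1)
      = (u 0 : ℂ) * Real.exp x * (ψ x + φ x)
        - (((u' x : ℂ) * φ x + (u x : ℂ) * ψ x)
          + ((u' x : ℂ) * ψ x + (u x : ℂ) * φ x)) := by
    intro x
    have h1 : (1:ℝ) + (Real.exp x - 1) = Real.exp x := by ring
    have hexp : ((Real.exp x : ℝ) : ℂ) ≠ 0 := Complex.ofReal_ne_zero.mpr (Real.exp_ne_zero x)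
    simp only [hGdef, h1, Real.log_exp, abs_of_pos (Real.exp_pos x), Complex.real_smul]
    push_cast
    field_simp
    ring
  simp_rw [hGx]
  have intBA : IntegrableOn (fun x => (u' x : ℂ) * ψ x + (u x : ℂ) * φ x) (Set.Ioi 0) :=
    intB.add intA
  have intQ : IntegrableOn (fun x => ((u' x : ℂ) * φ x + (u x : ℂ) * ψ x)
      + ((u' x : ℂ) * ψ x + (u x : ℂ) * φ x)) (Set.Ioi 0) := intIbp.add intBA
  rw [MeasureTheory.integral_sub intP intQ,
    MeasureTheory.integral_add intIbp intBA,
    MeasureTheory.integral_add intB intA, expint, ibp]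
  -- rewrite RHS
  have hRHS1 : ∫ x in Set.Ioi (0:ℝ), (u x : ℂ) * g x * h x
      = ∫ x in Set.Ioi (0:ℝ), (u x : ℂ) * φ x := by
    simp only [hφdef, mul_assoc]
  have hRHS2 : ∫ x in Set.Ioi (0:ℝ), (u' x : ℂ) * derivWithin φ (Set.Ici 0) x
      = ∫ x in Set.Ioi (0:ℝ), (u' x : ℂ) * ψ x := by
    refine MeasureTheory.setIntegral_congr_fun measurableSet_Ioi (fun x hx => ?_)
    rw [hderivφ x hx]
  rw [hRHS1, hRHS2]
  ring
end
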